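/- arXiv:1910.09816 — 4 statements merged into one kernel-verified Lean document; each statement's English description precedes it below -/
import Mathlib

section
/- Let (A,φ) be a PCA over Set. The terminal object ∇1 of Asm(A,φ) is projective (every morphism from ∇1 to the codomain of a regular epimorphism lifts along it) if and only if φ is generated by singletons, i.e., there exists a set C ⊆ A closed under application (if a,b ∈ C and ab is defined then ab ∈ C) such that φ = {U ⊆ A | ∃a ∈ C, a ∈ U}. -/
open CategoryTheory

namespace PcaPaper

/-- A partial binary application on `A`. -/
abbrev PApp (A : Type) := A → A → Option A

variable {A B C : Type}

/-- Definedness of the application of inhabited subsets. -/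
def SubDef (app : PApp A) (U V : Set A) : Prop :=
  ∀ a ∈ U, ∀ b ∈ V, (app a b).isSome

/-- Application of subsets. -/
def SubApp (app : PApp A) (U V : Set A) : Set A :=
  {c | ∃ a ∈ U, ∃ b ∈ V, app a b = some c}

/-- Terms with `n` variables, built from variables by application. -/
inductive Term (n : ℕ) : Type
  | var : Fin n → Term n
  | op : Term n → Term n → Term n

/-- Evaluation of a term at a vector of elements, as a partial function. -/
def Term.eval (app : PApp A) : {n : ℕ} → Term n → (Fin n → A) → Option A
  | _, .var i, ρ => some (ρ i)
  | _, .op s t, ρ => (Term.eval app s ρ).bind fun x => (Term.eval app t ρ).bind fun y => app x y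

/-- Evaluation of a term at a vector of subsets. -/
def Term.subEval (app : PApp A) : {n : ℕ} → Term n → (Fin n → Set A) → Set A
  | _, .var i, ρ => ρ i
  | _, .op s t, ρ => SubApp app (Term.subEval app s ρ) (Term.subEval app t ρ)

/-- Definedness of the evaluation of a term at a vector of subsets. -/
def Term.subDef (app : PApp A) : {n : ℕ} → Term n → (Fin n → Set A) → Prop
  | _, .var _, _ => True
  | _, .op s t, ρ => Term.subDef app s ρ ∧ Term.subDef app t ρ ∧
      SubDef app (Term.subEval app s ρ) (Term.subEval app t ρ)

/-- `r · a 0 · … · a (k-1)`, associated to the left. -/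
def appVec (app : PApp A) (r : A) : (k : ℕ) → (Fin k → A) → Option A
  | 0, _ => some r
  | k + 1, a => (appVec app r k fun i => a i.castSucc).bind fun s => app s (a (Fin.last k))

/-- `U` realizes `λ x₀ … xₙ. t`. -/
def Realizes (app : PApp A) (U : Set A) {n : ℕ} (t : Term (n + 1)) : Prop :=
  ∀ r ∈ U, ∀ a : Fin (n + 1) → A,
    (appVec app r n fun i => a i.castSucc).isSome ∧
    ∀ b, Term.eval app t a = some b → appVec app r (n + 1) a = some b

/-- A filter of inhabited subsets on a partial applicative structure. -/
structure IsPcaFilter (app : PApp A) (φ : Set (Set A)) : Prop where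
  nonempty : ∀ U ∈ φ, U.Nonempty
  upward : ∀ U ∈ φ, ∀ V : Set A, U ⊆ V → V ∈ φ
  appClosed : ∀ U ∈ φ, ∀ V ∈ φ, SubDef app U V → SubApp app U V ∈ φ

/-- Combinatorial completeness of a set of subsets. -/
def CombComplete (app : PApp A) (G : Set (Set A)) : Prop :=
  ∀ (n : ℕ) (t : Term (n + 1)), ∃ U ∈ G, Realizes app U t

/-- The least filter containing `G`. -/
def genFilter (app : PApp A) (G : Set (Set A)) : Set (Set A) :=
  ⋂₀ {ψ | IsPcaFilter app ψ ∧ G ⊆ ψ}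

/-- A (relative) PCA over the base category `Set`: a nonempty set with a partial
binary application and a combinatorially complete filter of inhabited subsets. -/
structure PCA (A : Type) where
  app : PApp A
  nonemptyCarrier : Nonempty A
  filt : Set (Set A)
  isFilter : IsPcaFilter app filt
  complete : CombComplete app filt

/- ### Helper lemmas -/

lemma isSome_bind_left {α β : Type} {o : Option α} {f : α → Option β}
    (h : (o.bind f).isSome) : o.isSome := by
  cases o <;> simp_all

lemma appVec_two_pre (app : PApp A) (r u v x : A) :
    (appVec app r 2 fun i => (![u, v, x] : Fin 3 → A) i.castSucc)
      = (app r u).bind fun s => app s v := rfl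

lemma appVec_three_cons (app : PApp A) (r u v x : A) :
    appVec app r (2 + 1) ![u, v, x]
      = ((app r u).bind fun s => app s v).bind fun s => app s x := rfl

lemma eval_comp_term (app : PApp A) (u v x : A) :
    Term.eval app (Term.op (.var 1) (.op (.var 0) (.var 2))) ![u, v, x]
      = (app u x).bind fun y => app v y := by
  simp [Term.eval]

lemma eval_app2_term (app : PApp A) (u v x : A) :
    Term.eval app (Term.op (.op (.var 0) (.var 1)) (.var 2)) ![u, v, x]
      = (app u v).bind fun d => app d x := by
  simp [Term.eval]

lemma filt_nonempty (P : PCA A) : ∃ U, U ∈ P.filt := by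
  obtain ⟨U, hU, -⟩ := P.complete 0 (.var 0)
  exact ⟨U, hU⟩

lemma univ_mem_filt (P : PCA A) : (Set.univ : Set A) ∈ P.filt := by
  obtain ⟨U, hU⟩ := filt_nonempty P
  exact P.isFilter.upward U hU _ (Set.subset_univ U)

lemma exists_ireal (P : PCA A) :
    ∃ U ∈ P.filt, ∀ r ∈ U, ∀ a : A, P.app r a = some a := by
  obtain ⟨U, hU, hreal⟩ := P.complete 0 (.var 0)
  refine ⟨U, hU, fun r hr a => ?_⟩
  have h := (hreal r hr fun _ => a).2 a (by simp [Term.eval])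
  simpa [appVec] using h

lemma realizes3_chain (P : PCA A) {T : Set A} {t : Term (2 + 1)}
    (hreal : Realizes P.app T t) {r : A} (hr : r ∈ T) (u v : A) :
    ∃ s w, P.app r u = some s ∧ P.app s v = some w := by
  have h1 : ((P.app r u).bind fun s => P.app s v).isSome := by
    have h := (hreal r hr ![u, v, v]).1
    rwa [appVec_two_pre] at h
  cases hru : P.app r u with
  | none => rw [hru] at h1; simp at h1
  | some s =>
    rw [hru] at h1
    simp only [Option.bind_some] at h1
    obtain ⟨w, hw⟩ := Option.isSome_iff_exists.mp h1
    exact ⟨s, w, rfl, hw⟩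

lemma exists_tracker3 (P : PCA A) (t : Term (2 + 1)) {U V : Set A}
    (hU : U ∈ P.filt) (hV : V ∈ P.filt) :
    ∃ W ∈ P.filt, ∀ w ∈ W, ∃ u ∈ U, ∃ v ∈ V,
      ∀ x c : A, Term.eval P.app t ![u, v, x] = some c → P.app w x = some c := by
  obtain ⟨T, hT, hreal⟩ := P.complete 2 t
  have hdef1 : SubDef P.app T U := by
    intro r hr u _
    obtain ⟨s, w, hs, -⟩ := realizes3_chain P hreal hr u u
    simp [hs]
  have hTU := P.isFilter.appClosed T hT U hU hdef1
  have hdef2 : SubDef P.app (SubApp P.app T U) V := by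
    rintro s ⟨r, hr, u, hu, hru⟩ v _
    obtain ⟨s', w, hs', hw⟩ := realizes3_chain P hreal hr u v
    rw [hru] at hs'
    injection hs' with h
    subst h
    simp [hw]
  refine ⟨SubApp P.app (SubApp P.app T U) V,
    P.isFilter.appClosed _ hTU V hV hdef2, ?_⟩
  rintro w ⟨s, ⟨r, hr, u, hu, hru⟩, v, hv, hsv⟩
  refine ⟨u, hu, v, hv, fun x c hc => ?_⟩
  have h2 : appVec P.app r (2 + 1) ![u, v, x] = some c := (hreal r hr ![u, v, x]).2 c hc
  rw [appVec_three_cons, hru] at h2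
  simp only [Option.bind_some] at h2
  rw [hsv] at h2
  simpa using h2

/- ### Assemblies -/

/-- An assembly over a PCA `(A, φ)`. -/
structure Asm {A : Type} (P : PCA A) : Type 1 where
  carrier : Type
  E : carrier → A → Prop
  total : ∀ x, ∃ a, E x a

/-- `U` tracks the function `f` between (the carriers of) two assemblies. -/
def Tracks (P : PCA A) {X Y : Asm P} (U : Set A) (f : X.carrier → Y.carrier) : Prop :=
  ∀ x a r, X.E x a → r ∈ U → ∃ b, P.app r a = some b ∧ Y.E (f x) b

/-- The category of assemblies over a PCA. -/
instance asmCategory (P : PCA A) : Category (Asm P) where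
  Hom X Y := {f : X.carrier → Y.carrier // ∃ U ∈ P.filt, Tracks P U f}
  id X := ⟨fun x => x, by
    obtain ⟨U, hU, hI⟩ := exists_ireal P
    exact ⟨U, hU, fun x a r hx hr => ⟨a, hI r hr a, hx⟩⟩⟩
  comp {X Y Z} f g := ⟨fun x => g.1 (f.1 x), by
    obtain ⟨U, hU, hf⟩ := f.2
    obtain ⟨V, hV, hg⟩ := g.2
    obtain ⟨W, hW, hkey⟩ := exists_tracker3 P
      (Term.op (.var 1) (.op (.var 0) (.var 2))) hU hV
    refine ⟨W, hW, fun x a w hx hw => ?_⟩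
    obtain ⟨u, hu, v, hv, key⟩ := hkey w hw
    obtain ⟨b, hb, hYb⟩ := hf x a u hx hu
    obtain ⟨c, hc, hZc⟩ := hg (f.1 x) b v hYb hv
    refine ⟨c, key a c ?_, hZc⟩
    rw [eval_comp_term, hb]
    simpa using hc⟩
  id_comp f := Subtype.ext rfl
  comp_id f := Subtype.ext rfl
  assoc f g h := Subtype.ext rfl

/-- The global-sections-like functor `Γ : Asm(A,φ) ⥤ Set`. -/
def Gam (P : PCA A) : Asm P ⥤ Type where
  obj X := X.carrier
  map f := TypeCat.ofHom f.1
  map_id _ := rfl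
  map_comp _ _ := rfl

/-- The constant-object assembly `∇ Y`. -/
def nablaObj (P : PCA A) (Y : Type) : Asm P where
  carrier := Y
  E := fun _ _ => True
  total := fun _ => P.nonemptyCarrier.elim fun a => ⟨a, trivial⟩

/-- The functor `∇ : Set ⥤ Asm(A,φ)`. -/
def Nab (P : PCA A) : Type ⥤ Asm P where
  obj Y := nablaObj P Y
  map {Y Z} f := ⟨f, by
    obtain ⟨U, hU, hI⟩ := exists_ireal P
    exact ⟨U, hU, fun y a r _ hr => ⟨a, hI r hr a, trivial⟩⟩⟩
  map_id _ := Subtype.ext rfl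
  map_comp _ _ := Subtype.ext rfl

/- ### Applicative morphisms -/

/-- The image of a subset under a relation. -/
def relImage (f : A → B → Prop) (V : Set A) : Set B :=
  {b | ∃ a ∈ V, f a b}

/-- `U` tracks the relation `f` as an applicative (pre)morphism. -/
def Tracks₂ (appA : PApp A) (appB : PApp B) (U : Set B) (f : A → B → Prop) : Prop :=
  ∀ a a' c, appA a a' = some c → ∀ b b', f a b → f a' b' → ∀ r ∈ U,
    ∃ d e, appB r b = some d ∧ appB d b' = some e ∧ f c e

/-- `f ⊆ A × B` is an applicative morphism `(A,φ) → (B,ψ)`. -/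
structure IsAppMor (appA : PApp A) (φ : Set (Set A)) (appB : PApp B) (ψ : Set (Set B))
    (f : A → B → Prop) : Prop where
  total : ∀ a, ∃ b, f a b
  tracked : ∃ U ∈ ψ, Tracks₂ appA appB U f
  image : ∀ V ∈ φ, relImage f V ∈ ψ

/-- The preorder `f ≤ f'` on relations `A × B`, relative to `(B,ψ)`. -/
def RelLe (appB : PApp B) (ψ : Set (Set B)) (f f' : A → B → Prop) : Prop :=
  ∃ U ∈ ψ, ∀ a b, f a b → ∀ r ∈ U, ∃ c, appB r b = some c ∧ f' a c

/-- Relational composition: `(RelComp g f) a c ↔ ∃ b, f a b ∧ g b c`. -/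
def RelComp (g : B → C → Prop) (f : A → B → Prop) : A → C → Prop :=
  fun a c => ∃ b, f a b ∧ g b c

/-- The diagonal (identity) relation `δ_A`. -/
def relId (A : Type) : A → A → Prop := fun a b => a = b

/- ### The functor Asm(f) induced by an applicative morphism -/

/-- The action of an applicative morphism on an assembly. -/
def asmObj (P : PCA A) (Q : PCA B) (f : A → B → Prop) (htot : ∀ a, ∃ b, f a b)
    (X : Asm P) : Asm Q where
  carrier := X.carrier
  E := fun x b => ∃ a, X.E x a ∧ f a b
  total := fun x => by
    obtain ⟨a, ha⟩ := X.total x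
    obtain ⟨b, hb⟩ := htot a
    exact ⟨b, a, ha, hb⟩

lemma tracks_asmMap {P : PCA A} {Q : PCA B} {f : A → B → Prop}
    (hf : IsAppMor P.app P.filt Q.app Q.filt f) {X Y : Asm P}
    (g : X.carrier → Y.carrier) (hg : ∃ U ∈ P.filt, Tracks P U g) :
    ∃ W ∈ Q.filt,
      Tracks Q (X := asmObj P Q f hf.total X) (Y := asmObj P Q f hf.total Y) W g := by
  obtain ⟨U, hU, hgU⟩ := hg
  obtain ⟨T, hT, hfT⟩ := hf.tracked
  have hfU : relImage f U ∈ Q.filt := hf.image U hU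
  obtain ⟨W, hW, hkey⟩ := exists_tracker3 Q
    (Term.op (.op (.var 0) (.var 1)) (.var 2)) hT hfU
  refine ⟨W, hW, ?_⟩
  rintro x b w ⟨a, hxa, hab⟩ hw
  obtain ⟨v, hv, y, hy, key⟩ := hkey w hw
  obtain ⟨u, hu, huy⟩ := hy
  obtain ⟨a', ha', hEa'⟩ := hgU x a u hxa hu
  obtain ⟨d, e, hd, he, hfe⟩ := hfT u a a' ha' y b huy hab v hv
  refine ⟨e, key b e ?_, a', hEa', hfe⟩
  rw [eval_app2_term, hd]
  simpa using he

/-- The functor `Asm(f) : Asm(A,φ) ⥤ Asm(B,ψ)` induced by an applicative morphism. -/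
def asmFunctor {P : PCA A} {Q : PCA B} {f : A → B → Prop}
    (hf : IsAppMor P.app P.filt Q.app Q.filt f) : Asm P ⥤ Asm Q where
  obj X := asmObj P Q f hf.total X
  map {X Y} g := ⟨g.1, tracks_asmMap hf g.1 g.2⟩
  map_id _ := Subtype.ext rfl
  map_comp _ _ := Subtype.ext rfl
/- ### Products of PASs -/

/-- Coordinatewise partial application on `A × B`. -/
def prodApp (appA : PApp A) (appB : PApp B) : PApp (A × B) := fun p q =>
  (appA p.1 q.1).bind fun x => (appB p.2 q.2).bind fun y => some (x, y)

/-- The set `φ × ψ` of rectangles `U ×ˢ V` with `U ∈ φ` and `V ∈ ψ`. -/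
def prodFiltSet (φ : Set (Set A)) (ψ : Set (Set B)) : Set (Set (A × B)) :=
  {W | ∃ U ∈ φ, ∃ V ∈ ψ, W = U ×ˢ V}

/-- The filter `⟨φ × ψ⟩` of the pseudocoproduct of two PCAs. -/
def prodFilt (P : PCA A) (Q : PCA B) : Set (Set (A × B)) :=
  genFilter (prodApp P.app Q.app) (prodFiltSet P.filt Q.filt)

/- ### Quasi-surjectivity and computational density -/

/-- A quasi-surjective applicative morphism. -/
def QuasiSurjective (P : PCA A) (Q : PCA B) (f : A → B → Prop) : Prop :=
  ∃ N ∈ Q.filt, ∀ U ∈ Q.filt, ∃ V ∈ P.filt,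
    ∀ n ∈ N, ∀ b ∈ relImage f V, ∃ c, Q.app n b = some c ∧ c ∈ U

/-- A computationally dense applicative morphism. -/
def CompDense (P : PCA A) (Q : PCA B) (f : A → B → Prop) : Prop :=
  ∃ M ∈ Q.filt, ∀ U ∈ Q.filt, ∃ V ∈ P.filt,
    (∀ r ∈ V, ∀ a : A, (P.app r a).isSome) ∧
    (∀ r ∈ V, ∀ a a', P.app r a = some a' →
      (∀ u ∈ U, ∀ b, f a b → (Q.app u b).isSome) →
      ∀ m ∈ M, ∀ b', f a' b' →
        ∃ c, Q.app m b' = some c ∧ ∃ u ∈ U, ∃ b'', f a b'' ∧ Q.app u b'' = some c)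

/- ### Slicing: fiberwise filters over an assembly -/

/-- Fiberwise definedness of the application of two subsets of `I × A`. -/
def fibSubDef (app : PApp A) {I : Type} (U V : Set (I × A)) : Prop :=
  ∀ i r s, (i, r) ∈ U → (i, s) ∈ V → (app r s).isSome

/-- Fiberwise application of two subsets of `I × A`. -/
def fibSubApp (app : PApp A) {I : Type} (U V : Set (I × A)) : Set (I × A) :=
  {p | ∃ r s, (p.1, r) ∈ U ∧ (p.1, s) ∈ V ∧ app r s = some p.2}

/-- A fiberwise filter over `I`. -/
structure IsFibFilter (app : PApp A) (I : Type) (Ψ : Set (Set (I × A))) : Prop where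
  inhab : ∀ U ∈ Ψ, ∀ i : I, ∃ a, (i, a) ∈ U
  upward : ∀ U ∈ Ψ, ∀ V : Set (I × A), U ⊆ V → V ∈ Ψ
  appClosed : ∀ U ∈ Ψ, ∀ V ∈ Ψ, fibSubDef app U V → fibSubApp app U V ∈ Ψ

/-- The filter `φ_I` of the slice PCA over an assembly `I`: the least fiberwise filter
containing `E_I` and all sets `|I| × V` for `V ∈ φ`. -/
def sliceFilt (P : PCA A) (I : Asm P) : Set (Set (I.carrier × A)) :=
  ⋂₀ {Ψ | IsFibFilter P.app I.carrier Ψ ∧ {p : I.carrier × A | I.E p.1 p.2} ∈ Ψ ∧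
      ∀ V ∈ P.filt, {p : I.carrier × A | p.2 ∈ V} ∈ Ψ}

lemma sliceFilt_upward {P : PCA A} {I : Asm P} {U V : Set (I.carrier × A)}
    (hU : U ∈ sliceFilt P I) (hUV : U ⊆ V) : V ∈ sliceFilt P I := by
  rw [sliceFilt, Set.mem_sInter] at hU ⊢
  intro Ψ hΨ
  exact hΨ.1.upward U (hU Ψ hΨ) V hUV

lemma sliceFilt_appClosed {P : PCA A} {I : Asm P} {U V : Set (I.carrier × A)}
    (hU : U ∈ sliceFilt P I) (hV : V ∈ sliceFilt P I) (hdef : fibSubDef P.app U V) :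
    fibSubApp P.app U V ∈ sliceFilt P I := by
  rw [sliceFilt, Set.mem_sInter] at hU hV ⊢
  intro Ψ hΨ
  exact hΨ.1.appClosed U (hU Ψ hΨ) V (hV Ψ hΨ) hdef

lemma base_mem_sliceFilt {P : PCA A} {I : Asm P} {V : Set A} (hV : V ∈ P.filt) :
    {p : I.carrier × A | p.2 ∈ V} ∈ sliceFilt P I := by
  rw [sliceFilt, Set.mem_sInter]
  intro Ψ hΨ
  exact hΨ.2.2 V hV

lemma EI_mem_sliceFilt (P : PCA A) (I : Asm P) :
    {p : I.carrier × A | I.E p.1 p.2} ∈ sliceFilt P I := by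
  rw [sliceFilt, Set.mem_sInter]
  intro Ψ hΨ
  exact hΨ.2.1

lemma exists_fib_tracker3 (P : PCA A) (I : Asm P) (t : Term (2 + 1))
    {U V : Set (I.carrier × A)} (hU : U ∈ sliceFilt P I) (hV : V ∈ sliceFilt P I) :
    ∃ W ∈ sliceFilt P I, ∀ i w, (i, w) ∈ W → ∃ u v, (i, u) ∈ U ∧ (i, v) ∈ V ∧
      ∀ x c : A, Term.eval P.app t ![u, v, x] = some c → P.app w x = some c := by
  obtain ⟨T, hT, hreal⟩ := P.complete 2 t
  have hT' : {p : I.carrier × A | p.2 ∈ T} ∈ sliceFilt P I := base_mem_sliceFilt hT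
  have hdef1 : fibSubDef P.app {p : I.carrier × A | p.2 ∈ T} U := by
    intro i r s hr _
    obtain ⟨s', w', h1, -⟩ := realizes3_chain P hreal hr s s
    simp [h1]
  have h1mem := sliceFilt_appClosed hT' hU hdef1
  have hdef2 : fibSubDef P.app (fibSubApp P.app {p : I.carrier × A | p.2 ∈ T} U) V := by
    rintro i s v ⟨r, u, hr, hu, hru⟩ _
    obtain ⟨s', w', hs', hw'⟩ := realizes3_chain P hreal hr u v
    rw [hru] at hs'
    injection hs' with h
    subst h
    simp [hw']
  refine ⟨_, sliceFilt_appClosed h1mem hV hdef2, ?_⟩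
  rintro i w ⟨s, v, ⟨r, u, hr, hu, hru⟩, hv, hsv⟩
  refine ⟨u, v, hu, hv, fun x c hc => ?_⟩
  have h2 : appVec P.app r (2 + 1) ![u, v, x] = some c := (hreal r hr ![u, v, x]).2 c hc
  rw [appVec_three_cons, hru] at h2
  simp only [Option.bind_some] at h2
  rw [hsv] at h2
  simpa using h2

/- ### The category of assemblies over the slice PCA `(A,φ)/I` -/

/-- Assemblies over the slice PCA `(A,φ)/I`. -/
structure SliceAsm (P : PCA A) (I : Asm P) : Type 1 where
  carrier : Type
  k : carrier → I.carrier
  E : carrier → A → Prop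
  total : ∀ x, ∃ a, E x a

/-- Fiberwise tracking for morphisms of assemblies over `(A,φ)/I`. -/
def SliceTracks (P : PCA A) (I : Asm P) {X Y : SliceAsm P I} (U : Set (I.carrier × A))
    (f : X.carrier → Y.carrier) : Prop :=
  ∀ x a r, X.E x a → (X.k x, r) ∈ U → ∃ b, P.app r a = some b ∧ Y.E (f x) b

instance sliceAsmCategory (P : PCA A) (I : Asm P) : Category (SliceAsm P I) where
  Hom X Y := {f : X.carrier → Y.carrier //
    (∀ x, Y.k (f x) = X.k x) ∧ ∃ U ∈ sliceFilt P I, SliceTracks P I U f}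
  id X := ⟨fun x => x, fun _ => rfl, by
    obtain ⟨U, hU, hI⟩ := exists_ireal P
    exact ⟨{p | p.2 ∈ U}, base_mem_sliceFilt hU,
      fun x a r hx hr => ⟨a, hI r hr a, hx⟩⟩⟩
  comp {X Y Z} f g := ⟨fun x => g.1 (f.1 x), fun x => (g.2.1 (f.1 x)).trans (f.2.1 x), by
    obtain ⟨U, hU, hf⟩ := f.2.2
    obtain ⟨V, hV, hg⟩ := g.2.2
    obtain ⟨W, hW, hkey⟩ := exists_fib_tracker3 P I
      (Term.op (.var 1) (.op (.var 0) (.var 2))) hU hV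
    refine ⟨W, hW, fun x a w hx hw => ?_⟩
    obtain ⟨u, v, hu, hv, key⟩ := hkey (X.k x) w hw
    obtain ⟨b, hb, hYb⟩ := hf x a u hx hu
    have hv' : (Y.k (f.1 x), v) ∈ V := by rw [f.2.1 x]; exact hv
    obtain ⟨c, hc, hZc⟩ := hg (f.1 x) b v hYb hv'
    refine ⟨c, key a c ?_, hZc⟩
    rw [eval_comp_term, hb]
    simpa using hc⟩
  id_comp f := Subtype.ext rfl
  comp_id f := Subtype.ext rfl
  assoc f g h := Subtype.ext rfl

/- ### Families of assemblies (products of PCAs) -/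

/-- The category of families of assemblies over a family of PCAs, with uniformly
tracked families of morphisms; this is the category of assemblies over the product
PCA of the family, taken over the product of the base categories. -/
structure FamAsm {I : Type} {A : I → Type} (P : ∀ i, PCA (A i)) : Type 1 where
  obj : ∀ i, Asm (P i)

instance famAsmCategory {I : Type} {A : I → Type} (P : ∀ i, PCA (A i)) :
    Category (FamAsm P) where
  Hom X Y := {f : ∀ i, (X.obj i).carrier → (Y.obj i).carrier //
    ∃ U : ∀ i, Set (A i), (∀ i, U i ∈ (P i).filt) ∧ ∀ i, Tracks (P i) (U i) (f i)}
  id X := ⟨fun i x => x, by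
    choose U hU using fun i => exists_ireal (P i)
    exact ⟨U, fun i => (hU i).1, fun i x a r hx hr => ⟨a, (hU i).2 r hr a, hx⟩⟩⟩
  comp {X Y Z} f g := ⟨fun i x => g.1 i (f.1 i x), by
    obtain ⟨U, hU, hf⟩ := f.2
    obtain ⟨V, hV, hg⟩ := g.2
    choose W hW using fun i => exists_tracker3 (P i)
      (Term.op (.var 1) (.op (.var 0) (.var 2))) (hU i) (hV i)
    refine ⟨W, fun i => (hW i).1, fun i x a w hx hw => ?_⟩
    obtain ⟨u, hu, v, hv, key⟩ := (hW i).2 w hw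
    obtain ⟨b, hb, hYb⟩ := hf i x a u hx hu
    obtain ⟨c, hc, hZc⟩ := hg i (f.1 i x) b v hYb hv
    refine ⟨c, key a c ?_, hZc⟩
    rw [eval_comp_term, hb]
    simpa using hc⟩
  id_comp f := Subtype.ext rfl
  comp_id f := Subtype.ext rfl
  assoc f g h := Subtype.ext rfl

/- ### Auxiliary lemmas for Statement 12 -/

lemma appVec_one_pre' (app : PApp A) (r u v : A) :
    (appVec app r 1 fun i => (![u, v] : Fin 2 → A) i.castSucc) = app r u := rfl

lemma appVec_two_cons' (app : PApp A) (r u v : A) :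
    appVec app r (1 + 1) ![u, v] = (app r u).bind fun s => app s v := rfl

lemma realizes2_def' (P : PCA A) {T : Set A} {t : Term (1 + 1)}
    (hreal : Realizes P.app T t) {r : A} (hr : r ∈ T) (u : A) :
    (P.app r u).isSome := by
  have h := (hreal r hr ![u, u]).1
  rwa [appVec_one_pre'] at h

lemma realizes2_chain' (P : PCA A) {T : Set A} {t : Term (1 + 1)}
    (hreal : Realizes P.app T t) {r : A} (hr : r ∈ T) {u v c : A}
    (hc : Term.eval P.app t ![u, v] = some c) :
    ∃ s, P.app r u = some s ∧ P.app s v = some c := by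
  have h2 := (hreal r hr ![u, v]).2 c hc
  rw [appVec_two_cons'] at h2
  cases hru : P.app r u with
  | none => rw [hru] at h2; simp at h2
  | some s =>
    rw [hru] at h2
    simp only [Option.bind_some] at h2
    exact ⟨s, rfl, h2⟩

lemma realizes3_eval' (P : PCA A) {T : Set A} {t : Term (2 + 1)}
    (hreal : Realizes P.app T t) {r : A} (hr : r ∈ T) {u v x c : A}
    (hc : Term.eval P.app t ![u, v, x] = some c) {s w : A}
    (hs : P.app r u = some s) (hw : P.app s v = some w) :
    P.app w x = some c := by
  have h2 := (hreal r hr ![u, v, x]).2 c hc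
  rw [appVec_three_cons, hs] at h2
  simp only [Option.bind_some] at h2
  rw [hw] at h2
  simpa using h2

lemma eval_var0' (app : PApp A) (u v : A) :
    Term.eval app (Term.var 0 : Term (1 + 1)) ![u, v] = some u := by
  simp [Term.eval]

lemma eval_var1' (app : PApp A) (u v : A) :
    Term.eval app (Term.var 1 : Term (1 + 1)) ![u, v] = some v := by
  simp [Term.eval]

lemma eval_flip' (app : PApp A) (k w : A) :
    Term.eval app (Term.op (.var 1) (.var 0) : Term (1 + 1)) ![k, w] = app w k := by
  simp [Term.eval]

lemma eval_pair_term' (app : PApp A) (u v k : A) :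
    Term.eval app (Term.op (.op (.var 2) (.var 0)) (.var 1)) ![u, v, k]
      = (app k u).bind fun s => app s v := by
  simp [Term.eval]

lemma eval_fstapp' (app : PApp A) (s u a : A) :
    Term.eval app (Term.op (.var 0) (.var 1) : Term (2 + 1)) ![s, u, a] = app s u := by
  simp [Term.eval]

/-- Core of the forward direction: from projectivity of `∇1`, every `U ∈ φ`
contains an element whose singleton is in `φ`. -/
lemma exists_singleton_of_proj (P : PCA A)
    (hproj : ∀ (X Y : Asm P) (e : X ⟶ Y), Nonempty (RegularEpi e) →
        ∀ g : nablaObj P PUnit ⟶ Y, ∃ h : nablaObj P PUnit ⟶ X, h ≫ e = g)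
    (U : Set A) (hU : U ∈ P.filt) : ∃ a ∈ U, {a} ∈ P.filt := by
  classical
  obtain ⟨Pr, hPrf, hPrR⟩ := P.complete 2 (Term.op (.op (.var 2) (.var 0)) (.var 1))
  obtain ⟨K, hKf, hKR⟩ := P.complete 1 (Term.var 0)
  obtain ⟨K2, hK2f, hK2R⟩ := P.complete 1 (Term.var 1)
  obtain ⟨T2, hT2f, hT2R⟩ := P.complete 1 (Term.op (.var 1) (.var 0))
  obtain ⟨UI, hUI, hIr⟩ := exists_ireal P
  obtain ⟨u₀, hu₀⟩ := P.isFilter.nonempty U hU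
  -- the assembly `X` over `U` with diagonal realizability
  let X : Asm P := ⟨{a // a ∈ U}, fun x b => b = x.1, fun x => ⟨x.1, rfl⟩⟩
  -- the "pair" assembly
  let W : Asm P := ⟨X.carrier × X.carrier,
    fun z w => ∃ p ∈ Pr, ∃ s, P.app p z.1.1 = some s ∧ P.app s z.2.1 = some w,
    fun z => by
      obtain ⟨p, hp⟩ := P.isFilter.nonempty Pr hPrf
      obtain ⟨s, w, hs, hw⟩ := realizes3_chain P hPrR hp z.1.1 z.2.1
      exact ⟨w, p, hp, s, hs, hw⟩⟩
  -- first projection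
  have hdefT2K : SubDef P.app T2 K := fun r hr k _ => realizes2_def' P hT2R hr k
  have hdefT2K2 : SubDef P.app T2 K2 := fun r hr k _ => realizes2_def' P hT2R hr k
  let l : W ⟶ X := ⟨fun z => z.1, SubApp P.app T2 K,
    P.isFilter.appClosed T2 hT2f K hKf hdefT2K, by
    rintro z w c ⟨p, hp, s, hs, hw⟩ ⟨r, hr, k, hk, hrk⟩
    obtain ⟨s', hs', hsv⟩ := realizes2_chain' P hKR hk (eval_var0' P.app z.1.1 z.2.1)
    have hwk : P.app w k = some z.1.1 := by
      refine realizes3_eval' P hPrR hp ?_ hs hw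
      rw [eval_pair_term', hs']
      simpa using hsv
    obtain ⟨s'', hs'', hcw⟩ := realizes2_chain' P hT2R hr
      (by rw [eval_flip']; exact hwk)
    rw [hrk] at hs''
    injection hs'' with h
    subst h
    exact ⟨z.1.1, hcw, rfl⟩⟩
  -- second projection
  let r : W ⟶ X := ⟨fun z => z.2, SubApp P.app T2 K2,
    P.isFilter.appClosed T2 hT2f K2 hK2f hdefT2K2, by
    rintro z w c ⟨p, hp, s, hs, hw⟩ ⟨rr, hrr, k, hk, hrk⟩
    obtain ⟨s', hs', hsv⟩ := realizes2_chain' P hK2R hk (eval_var1' P.app z.1.1 z.2.1)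
    have hwk : P.app w k = some z.2.1 := by
      refine realizes3_eval' P hPrR hp ?_ hs hw
      rw [eval_pair_term', hs']
      simpa using hsv
    obtain ⟨s'', hs'', hcw⟩ := realizes2_chain' P hT2R hrr
      (by rw [eval_flip']; exact hwk)
    rw [hrk] at hs''
    injection hs'' with h
    subst h
    exact ⟨z.2.1, hcw, rfl⟩⟩
  -- the map to the terminal object
  let e : X ⟶ nablaObj P PUnit := ⟨fun _ => PUnit.unit, UI, hUI,
    fun x a rr _ hrr => ⟨a, hIr rr hrr a, trivial⟩⟩
  have hw' : l ≫ e = r ≫ e := Subtype.ext rfl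
  -- every cofork map out of `X` is constant
  have hregepi : RegularEpi e := by
    refine ⟨W, l, r, hw', ?_⟩
    have const : ∀ (s : Limits.Cofork l r) (x y : X.carrier), s.π.1 x = s.π.1 y := by
      intro s x y
      exact congrFun (congrArg Subtype.val s.condition) (x, y)
    refine Limits.Cofork.IsColimit.mk _ (fun s => ⟨fun _ => s.π.1 ⟨u₀, hu₀⟩, ?_⟩)
      (fun s => ?_) (fun s m hm => ?_)
    · -- tracking of the constant map out of ∇1
      obtain ⟨V, hV, hVt⟩ := s.π.2
      obtain ⟨G, hGf, hGR⟩ := P.complete 2 (Term.op (.var 0) (.var 1))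
      have hdefGV : SubDef P.app G V := by
        intro gg hg v _
        obtain ⟨s1, w1, hs1, -⟩ := realizes3_chain P hGR hg v v
        simp [hs1]
      have hdefGVU : SubDef P.app (SubApp P.app G V) U := by
        rintro c ⟨gg, hg, v, hv, hgv⟩ u hu
        obtain ⟨s1, w1, hs1, hw1⟩ := realizes3_chain P hGR hg v u
        rw [hgv] at hs1
        injection hs1 with h
        subst h
        simp [hw1]
      refine ⟨SubApp P.app (SubApp P.app G V) U,
        P.isFilter.appClosed _ (P.isFilter.appClosed G hGf V hV hdefGV) U hU hdefGVU, ?_⟩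
      rintro x a rr - ⟨c, ⟨gg, hg, v, hv, hgv⟩, u, hu, hcu⟩
      obtain ⟨b, hvb, hEb⟩ := hVt ⟨u, hu⟩ u v rfl hv
      have hra : P.app rr a = some b := by
        refine realizes3_eval' P hGR hg ?_ hgv hcu
        rw [eval_fstapp']
        exact hvb
      exact ⟨b, hra, const s ⟨u, hu⟩ ⟨u₀, hu₀⟩ ▸ hEb⟩
    · -- factorization
      apply Subtype.ext
      funext x
      exact const s ⟨u₀, hu₀⟩ x
    · -- uniqueness
      apply Subtype.ext
      funext u
      cases u
      exact congrFun (congrArg Subtype.val hm) ⟨u₀, hu₀⟩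
  obtain ⟨h, -⟩ := hproj X (nablaObj P PUnit) e ⟨hregepi⟩ (𝟙 _)
  obtain ⟨T, hT, hTt⟩ := h.2
  refine ⟨(h.1 PUnit.unit).1, (h.1 PUnit.unit).2, ?_⟩
  have hdef : SubDef P.app T Set.univ := by
    intro rr hrr a _
    obtain ⟨b, hb, -⟩ := hTt PUnit.unit a rr trivial hrr
    simp [hb]
  refine P.isFilter.upward _
    (P.isFilter.appClosed T hT _ (univ_mem_filt P) hdef) _ ?_
  rintro c ⟨rr, hrr, a, -, hra⟩
  obtain ⟨b, hb, hbx⟩ := hTt PUnit.unit a rr trivial hrr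
  rw [hb] at hra
  injection hra with hh
  subst hh
  exact hbx

/-- The terminal object `∇1` of `Asm(A,φ)` is projective (w.r.t. regular
epimorphisms) iff the filter `φ` is generated by a set `C` of elements of `A` that is
closed under application. -/
theorem statement12 (A : Type) (P : PCA A) :
    (∀ (X Y : Asm P) (e : X ⟶ Y), Nonempty (RegularEpi e) →
        ∀ g : nablaObj P PUnit ⟶ Y, ∃ h : nablaObj P PUnit ⟶ X, h ≫ e = g) ↔
      ∃ C : Set A,
        (∀ a ∈ C, ∀ b ∈ C, ∀ c, P.app a b = some c → c ∈ C) ∧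
        P.filt = {U : Set A | ∃ a ∈ C, a ∈ U} := by
  constructor
  · -- forward direction
    intro hproj
    refine ⟨{a | {a} ∈ P.filt}, ?_, ?_⟩
    · -- closure under application
      intro a ha b hb c hc
      have hdef : SubDef P.app {a} {b} := by
        rintro x rfl y rfl
        simp [hc]
      have hmem := P.isFilter.appClosed {a} ha {b} hb hdef
      refine P.isFilter.upward _ hmem _ ?_
      rintro c' ⟨x, rfl, y, rfl, hxy⟩
      rw [hc] at hxy
      injection hxy with h
      exact h.symm
    · -- the filter is generated by the singletons
      ext U
      constructor
      · intro hU
        obtain ⟨a, haU, ha⟩ := exists_singleton_of_proj P hproj U hU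
        exact ⟨a, ha, haU⟩
      · rintro ⟨a, ha, haU⟩
        exact P.isFilter.upward {a} ha U (by simpa [Set.singleton_subset_iff])
  · -- backward direction
    rintro ⟨C, hC, hφ⟩ X Y e hne g
    obtain ⟨he⟩ := hne
    have memC : ∀ {V : Set A}, V ∈ P.filt → ∃ c ∈ C, c ∈ V := by
      intro V hV
      rw [hφ] at hV
      exact hV
    obtain ⟨K, hKf, hKR⟩ := P.complete 1 (Term.var 0)
    obtain ⟨k, hkC, hkK⟩ := memC hKf
    obtain ⟨a₀, ha₀C, -⟩ := memC (univ_mem_filt P)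
    obtain ⟨UI, hUI, hIr⟩ := exists_ireal P
    -- `e` is surjective
    haveI : RegularEpi e := he
    have hsurj : ∀ y, ∃ x, e.1 x = y := by
      let χ : Y ⟶ nablaObj P Prop := ⟨fun y => ∃ x, e.1 x = y, UI, hUI,
        fun y a r _ hr => ⟨a, hIr r hr a, trivial⟩⟩
      let τ : Y ⟶ nablaObj P Prop := ⟨fun _ => True, UI, hUI,
        fun y a r _ hr => ⟨a, hIr r hr a, trivial⟩⟩
      have hcomp : e ≫ χ = e ≫ τ := Subtype.ext (funext fun x => eq_true ⟨x, rfl⟩)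
      have hχτ : χ = τ := by haveI := RegularEpi.epi e he; exact (cancel_epi e).mp hcomp
      intro y
      exact of_eq_true (congrFun (congrArg Subtype.val hχτ) y)
    -- the canonical quotient of `X`, through which `e` factors
    let Yp : Asm P := ⟨Y.carrier, fun y b => ∃ x, e.1 x = y ∧ X.E x b, fun y => by
      obtain ⟨x, hx⟩ := hsurj y
      obtain ⟨b, hb⟩ := X.total x
      exact ⟨b, x, hx, hb⟩⟩
    let f : X ⟶ Yp := ⟨e.1, UI, hUI, fun x a r hx hr => ⟨a, hIr r hr a, x, rfl, hx⟩⟩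
    have hcond : he.left ≫ f = he.right ≫ f :=
      Subtype.ext (funext fun z => congrFun (congrArg Subtype.val he.w) z)
    let m : Y ⟶ Yp := Limits.Cofork.IsColimit.desc he.isColimit f hcond
    have hfac : e ≫ m = f := Limits.Cofork.IsColimit.π_desc' he.isColimit f hcond
    have hm : ∀ y, m.1 y = y := by
      intro y
      obtain ⟨x, hx⟩ := hsurj y
      have h : m.1 (e.1 x) = e.1 x := congrFun (congrArg Subtype.val hfac) x
      rw [hx] at h
      exact h
    obtain ⟨Wm, hWm, hWmT⟩ := m.2
    obtain ⟨cm, hcmC, hcmW⟩ := memC hWm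
    obtain ⟨Ug, hUg, hUgT⟩ := g.2
    obtain ⟨cg, hcgC, hcgU⟩ := memC hUg
    obtain ⟨b₀, hb₀, hYb₀⟩ := hUgT PUnit.unit a₀ cg trivial hcgU
    have hb₀C : b₀ ∈ C := hC cg hcgC a₀ ha₀C b₀ hb₀
    obtain ⟨d₀, hd₀, x₀, hex₀, hXd₀⟩ := hWmT (g.1 PUnit.unit) b₀ cm hYb₀ hcmW
    rw [hm (g.1 PUnit.unit)] at hex₀
    have hd₀C : d₀ ∈ C := hC cm hcmC b₀ hb₀C d₀ hd₀
    obtain ⟨κ, hκ⟩ := Option.isSome_iff_exists.mp (realizes2_def' P hKR hkK d₀)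
    have hκC : κ ∈ C := hC k hkC d₀ hd₀C κ hκ
    have hκa : ∀ a, P.app κ a = some d₀ := by
      intro a
      obtain ⟨s, hs, hsv⟩ := realizes2_chain' P hKR hkK (eval_var0' P.app d₀ a)
      rw [hκ] at hs
      injection hs with h
      subst h
      exact hsv
    refine ⟨⟨fun _ => x₀, {κ}, ?_, ?_⟩, ?_⟩
    · rw [hφ]
      exact ⟨κ, hκC, rfl⟩
    · rintro u a r - rfl
      exact ⟨d₀, hκa a, hXd₀⟩
    · apply Subtype.ext
      funext u
      cases u
      exact hex₀

end PcaPaper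
end

section
/- Let (A,φ) be a PCA over Set and let I be an assembly over (A,φ). Then a subset U ⊆ |I| × A belongs to φ_I if and only if there exists V ∈ φ such that for all i ∈ |I|, r ∈ V and a ∈ A with E_I(i,a): ra is defined and (i, ra) ∈ U. -/
open CategoryTheory

namespace PcaPaper

variable {A B C : Type}

lemma eval_s_term (app : PApp A) (u v x : A) :
    Term.eval app (Term.op (.op (.var 0) (.var 2)) (.op (.var 1) (.var 2))) ![u, v, x]
      = (app u x).bind fun d => (app v x).bind fun e => app d e := by
  simp [Term.eval]

/-- For `V' ∈ φ` there is `W ∈ φ` of "constant" realizers: `w·a ∈ V'` always. -/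
lemma exists_const_tracker (P : PCA A) {V' : Set A} (hV' : V' ∈ P.filt) :
    ∃ W ∈ P.filt, ∀ w ∈ W, ∀ a : A, ∃ b ∈ V', P.app w a = some b := by
  obtain ⟨T, hT, hreal⟩ := P.complete 1 (.var 0)
  have hdef : SubDef P.app T V' := by
    intro r hr v hv
    have h := (hreal r hr ![v, v]).1
    simpa [appVec, Matrix.cons_val_zero] using h
  refine ⟨SubApp P.app T V', P.isFilter.appClosed T hT V' hV' hdef, ?_⟩
  rintro w ⟨r, hr, v, hv, hrv⟩ a
  have h := (hreal r hr ![v, a]).2 v (by simp [Term.eval])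
  refine ⟨v, hv, ?_⟩
  have : appVec P.app r (1 + 1) ![v, a]
      = (appVec P.app r 1 fun i => (![v, a] : Fin 2 → A) i.castSucc).bind
          fun s => P.app s (![v, a] (Fin.last 1)) := rfl
  rw [this] at h
  simp only [appVec, Option.bind_some] at h
  rw [show ((![v, a] : Fin 2 → A) ((Fin.last 0).castSucc)) = v from rfl, hrv] at h
  simpa using h

/-- The RHS predicate of statement 13 is a fiberwise filter. -/
lemma rhs_isFibFilter (P : PCA A) (I : Asm P) :
    IsFibFilter P.app I.carrier
      {U | ∃ V ∈ P.filt, ∀ i r a, r ∈ V → I.E i a →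
        ∃ b, P.app r a = some b ∧ (i, b) ∈ U} := by
  constructor
  · rintro U ⟨V, hV, h⟩ i
    obtain ⟨r, hr⟩ := P.isFilter.nonempty V hV
    obtain ⟨a, ha⟩ := I.total i
    obtain ⟨b, -, hb⟩ := h i r a hr ha
    exact ⟨b, hb⟩
  · rintro U ⟨V, hV, h⟩ W hUW
    refine ⟨V, hV, fun i r a hr ha => ?_⟩
    obtain ⟨b, h1, h2⟩ := h i r a hr ha
    exact ⟨b, h1, hUW h2⟩
  · rintro U ⟨V₁, hV₁, h₁⟩ W ⟨V₂, hV₂, h₂⟩ hdef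
    obtain ⟨V, hV, hkey⟩ := exists_tracker3 P
      (Term.op (.op (.var 0) (.var 2)) (.op (.var 1) (.var 2))) hV₁ hV₂
    refine ⟨V, hV, fun i r a hr ha => ?_⟩
    obtain ⟨u, hu, v, hv, key⟩ := hkey r hr
    obtain ⟨b₁, hb₁, hUb₁⟩ := h₁ i u a hu ha
    obtain ⟨b₂, hb₂, hWb₂⟩ := h₂ i v a hv ha
    have hd : (P.app b₁ b₂).isSome := hdef i b₁ b₂ hUb₁ hWb₂
    obtain ⟨c, hc⟩ := Option.isSome_iff_exists.mp hd
    refine ⟨c, key a c ?_, b₁, b₂, hUb₁, hWb₂, hc⟩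
    rw [eval_s_term, hb₁, hb₂]
    simpa using hc

/-- For an assembly `I` over `(A,φ)`, a subset `U ⊆ |I| × A` belongs to
the slice filter `φ_I` iff there is `V ∈ φ` such that for all `i`, all `r ∈ V` and all `a`
with `E_I(i,a)`, `ra` is defined and `(i, ra) ∈ U`. -/
theorem statement13 (A : Type) (P : PCA A) (I : Asm P) (U : Set (I.carrier × A)) :
    U ∈ sliceFilt P I ↔
      ∃ V ∈ P.filt, ∀ i r a, r ∈ V → I.E i a →
        ∃ b, P.app r a = some b ∧ (i, b) ∈ U := by
  constructor
  · intro hU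
    rw [sliceFilt, Set.mem_sInter] at hU
    refine hU _ ⟨rhs_isFibFilter P I, ?_, ?_⟩
    · obtain ⟨V, hV, hI⟩ := exists_ireal P
      exact ⟨V, hV, fun i r a hr ha => ⟨a, hI r hr a, ha⟩⟩
    · intro V' hV'
      obtain ⟨W, hW, hc⟩ := exists_const_tracker P hV'
      refine ⟨W, hW, fun i r a hr ha => ?_⟩
      obtain ⟨b, hb, hrb⟩ := hc r hr a
      exact ⟨b, hrb, hb⟩
  · rintro ⟨V, hV, h⟩
    have hB : {p : I.carrier × A | p.2 ∈ V} ∈ sliceFilt P I := base_mem_sliceFilt hV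
    have hE : {p : I.carrier × A | I.E p.1 p.2} ∈ sliceFilt P I := EI_mem_sliceFilt P I
    have hdef : fibSubDef P.app {p : I.carrier × A | p.2 ∈ V}
        {p : I.carrier × A | I.E p.1 p.2} := by
      intro i r a hr ha
      obtain ⟨b, hb, -⟩ := h i r a hr ha
      simp [hb]
    refine sliceFilt_upward (sliceFilt_appClosed hB hE hdef) ?_
    rintro ⟨i, c⟩ ⟨r, a, hr, ha, hrc⟩
    obtain ⟨b, hb, hbU⟩ := h i r a hr ha
    rw [hb] at hrc
    injection hrc with hbc
    simp only at hbc
    rwa [← hbc]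

end PcaPaper
end

section
/- Let (A,φ) be a PCA over Set and let I be an assembly over (A,φ). Define the category Asm_I whose objects are triples (X, k, E) with X a set, k: X → |I| a function, and E ⊆ X × A a relation such that every x ∈ X is related to some a ∈ A, and whose morphisms (X, k, E) → (X', k', E') are functions f: X → X' with k'∘f = k for which there exists U ∈ φ_I such that: for all x ∈ X, a ∈ A, r ∈ A with E(x,a) and (k(x), r) ∈ U, the product ra is defined and E'(f(x), ra). Then the slice category Asm(A,φ)/I is equivalent to Asm_I. -/
open CategoryTheory

namespace PcaPaper

variable {A B C : Type}

/- ### Generalized tracking lemmas -/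

lemma appVec_succ (app : PApp A) (r : A) (k : ℕ) (v : Fin (k + 1) → A) :
    appVec app r (k + 1) v
      = (appVec app r k fun i => v i.castSucc).bind fun s => app s (v (Fin.last k)) := rfl

lemma appVec_isSome_prefix (app : PApp A) (r : A) :
    ∀ (m : ℕ) (v : Fin m → A), (appVec app r m v).isSome →
      ∀ (k : ℕ) (h : k ≤ m), (appVec app r k fun i => v (Fin.castLE h i)).isSome := by
  intro m
  induction m with
  | zero =>
    intro v _ k hk
    have hk0 : k = 0 := Nat.le_zero.mp hk
    subst hk0
    simp [appVec]
  | succ m ih =>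
    intro v hv k hk
    rcases Nat.lt_or_ge k (m + 1) with h | h
    · have hk' : k ≤ m := Nat.lt_succ_iff.mp h
      rw [appVec_succ] at hv
      have h1 := isSome_bind_left hv
      have h2 := ih _ h1 k hk'
      have he : (fun i : Fin k => (fun i : Fin m => v i.castSucc) (Fin.castLE hk' i))
          = fun i => v (Fin.castLE hk i) := by
        funext i; rfl
      rwa [he] at h2
    · have hkm : k = m + 1 := le_antisymm hk h
      subst hkm
      have he : (fun i : Fin (m + 1) => v (Fin.castLE hk i)) = v := by
        funext i; rfl
      rwa [he]

lemma exists_trackerN (P : PCA A) (n : ℕ) (t : Term (n + 1)) (U : Fin n → Set A)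
    (hU : ∀ i, U i ∈ P.filt) :
    ∃ W ∈ P.filt, ∀ w ∈ W, ∃ u : Fin n → A, (∀ i, u i ∈ U i) ∧
      ∀ x c, Term.eval P.app t (Fin.snoc u x) = some c → P.app w x = some c := by
  obtain ⟨T, hT, hreal⟩ := P.complete n t
  have hdef : ∀ r ∈ T, ∀ u : Fin n → A, (appVec P.app r n u).isSome := by
    intro r hr u
    obtain ⟨a0⟩ := P.nonemptyCarrier
    have h := (hreal r hr (Fin.snoc u a0 : Fin (n + 1) → A)).1
    have he : (fun i : Fin n => (Fin.snoc u a0 : Fin (n + 1) → A) i.castSucc) = u := by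
      funext i; simp
    rwa [he] at h
  have main : ∀ k (hk : k ≤ n), ∃ W ∈ P.filt, ∀ w ∈ W, ∃ r ∈ T, ∃ u : Fin k → A,
      (∀ i, u i ∈ U (Fin.castLE hk i)) ∧ appVec P.app r k u = some w := by
    intro k
    induction k with
    | zero =>
      intro _
      exact ⟨T, hT, fun w hw => ⟨w, hw, Fin.elim0, fun i => i.elim0, rfl⟩⟩
    | succ k ih =>
      intro hk
      obtain ⟨W, hW, hWs⟩ := ih (Nat.le_of_succ_le hk)
      have hstep : ∀ w ∈ W, ∀ b : A, ∃ r ∈ T, ∃ u : Fin k → A,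
          (∀ i, u i ∈ U (Fin.castLE (Nat.le_of_succ_le hk) i)) ∧
          appVec P.app r (k + 1) (Fin.snoc u b : Fin (k + 1) → A) = P.app w b := by
        intro w hw b
        obtain ⟨r, hr, u, hu, hru⟩ := hWs w hw
        refine ⟨r, hr, u, hu, ?_⟩
        rw [appVec_succ]
        have h1 : (fun i : Fin k => (Fin.snoc u b : Fin (k + 1) → A) i.castSucc) = u := by
          funext i; simp
        rw [h1, Fin.snoc_last, hru]
        rfl
      have hsnoc_isSome : ∀ r ∈ T, ∀ (u : Fin k → A) (b : A),
          (appVec P.app r (k + 1) (Fin.snoc u b : Fin (k + 1) → A)).isSome := by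
        intro r hr u b
        classical
        set v : Fin n → A := fun i => if h : (i : ℕ) < k then u ⟨i, h⟩ else b with hvdef
        have hx := appVec_isSome_prefix P.app r n v (hdef r hr v) (k + 1) hk
        have he : (fun i : Fin (k + 1) => v (Fin.castLE hk i)) = Fin.snoc u b := by
          funext i
          refine Fin.lastCases ?_ ?_ i
          · rw [Fin.snoc_last]
            simp [hvdef]
          · intro i2
            rw [Fin.snoc_castSucc]
            simp [hvdef, i2.isLt]
        rwa [he] at hx
      have hdefW : SubDef P.app W (U (Fin.castLE hk (Fin.last k))) := by
        intro w hw b hb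
        obtain ⟨r, hr, u, hu, hru⟩ := hstep w hw b
        rw [← hru]
        exact hsnoc_isSome r hr u b
      refine ⟨SubApp P.app W (U (Fin.castLE hk (Fin.last k))),
        P.isFilter.appClosed W hW _ (hU _) hdefW, ?_⟩
      rintro w' ⟨w, hw, b, hb, hwb⟩
      obtain ⟨r, hr, u, hu, hru⟩ := hstep w hw b
      refine ⟨r, hr, (Fin.snoc u b : Fin (k + 1) → A), ?_, by rw [hru]; exact hwb⟩
      intro i
      refine Fin.lastCases ?_ ?_ i
      · rw [Fin.snoc_last]
        exact hb
      · intro i2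
        rw [Fin.snoc_castSucc]
        have he : Fin.castLE hk i2.castSucc = Fin.castLE (Nat.le_of_succ_le hk) i2 :=
          Fin.ext rfl
        rw [he]; exact hu i2
  obtain ⟨W, hW, hWs⟩ := main n le_rfl
  refine ⟨W, hW, fun w hw => ?_⟩
  obtain ⟨r, hr, u, hu, hru⟩ := hWs w hw
  refine ⟨u, fun i => hu i, fun x c hc => ?_⟩
  have h2 := (hreal r hr (Fin.snoc u x : Fin (n + 1) → A)).2 c hc
  rw [appVec_succ] at h2
  have he : (fun i : Fin n => (Fin.snoc u x : Fin (n + 1) → A) i.castSucc) = u := by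
    funext i; simp
  rw [he, Fin.snoc_last, hru] at h2
  simpa using h2

/- ### Pairing -/

/-- The term `λ x y z. z x y`. -/
def pairT : Term 3 := .op (.op (.var 2) (.var 0)) (.var 1)

noncomputable def Tset (P : PCA A) : Set A := (P.complete 2 pairT).choose

lemma Tset_filt (P : PCA A) : Tset P ∈ P.filt := (P.complete 2 pairT).choose_spec.1

lemma Tset_real (P : PCA A) : Realizes P.app (Tset P) pairT :=
  (P.complete 2 pairT).choose_spec.2

/-- The pairing `t·c·a` as a partial operation. -/
def pApp (P : PCA A) (t c a : A) : Option A := (P.app t c).bind fun s => P.app s a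

lemma pApp_isSome (P : PCA A) {t : A} (ht : t ∈ Tset P) (c a : A) :
    (pApp P t c a).isSome := by
  have h := (Tset_real P t ht ![c, a, a]).1
  rwa [appVec_two_pre] at h

lemma pApp_beta (P : PCA A) {t : A} (ht : t ∈ Tset P) {c a b : A}
    (hb : pApp P t c a = some b) {z d : A}
    (hz : ((P.app z c).bind fun s => P.app s a) = some d) : P.app b z = some d := by
  have he : Term.eval P.app pairT ![c, a, z] = some d := by
    simpa [pairT, Term.eval] using hz
  have h := (Tset_real P t ht ![c, a, z]).2 d he
  rw [appVec_three_cons] at h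
  rw [show ((P.app t c).bind fun s => P.app s a) = pApp P t c a from rfl, hb] at h
  simpa using h

lemma snoc1_zero (u : Fin 1 → A) (x : A) : (Fin.snoc u x : Fin 2 → A) 0 = u 0 := by
  simp [Fin.snoc] <;> exact congrArg u (Fin.ext rfl)

lemma snoc1_one (u : Fin 1 → A) (x : A) : (Fin.snoc u x : Fin 2 → A) 1 = x := by
  simp [Fin.snoc]

lemma snoc4_zero (u : Fin 4 → A) (x : A) : (Fin.snoc u x : Fin 5 → A) 0 = u 0 := by
  simp [Fin.snoc] <;> exact congrArg u (Fin.ext rfl)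

lemma snoc4_one (u : Fin 4 → A) (x : A) : (Fin.snoc u x : Fin 5 → A) 1 = u 1 := by
  simp [Fin.snoc] <;> exact congrArg u (Fin.ext rfl)

lemma snoc4_two (u : Fin 4 → A) (x : A) : (Fin.snoc u x : Fin 5 → A) 2 = u 2 := by
  simp [Fin.snoc] <;> exact congrArg u (Fin.ext rfl)

lemma snoc4_three (u : Fin 4 → A) (x : A) : (Fin.snoc u x : Fin 5 → A) 3 = u 3 := by
  simp [Fin.snoc] <;> exact congrArg u (Fin.ext rfl)

lemma snoc4_four (u : Fin 4 → A) (x : A) : (Fin.snoc u x : Fin 5 → A) 4 = x := by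
  simp [Fin.snoc] <;> (intro h; exact absurd h (by decide))

lemma snoc2_zero (u : Fin 2 → A) (x : A) : (Fin.snoc u x : Fin 3 → A) 0 = u 0 := by
  simp [Fin.snoc] <;> exact congrArg u (Fin.ext rfl)

lemma snoc2_one (u : Fin 2 → A) (x : A) : (Fin.snoc u x : Fin 3 → A) 1 = u 1 := by
  simp [Fin.snoc] <;> exact congrArg u (Fin.ext rfl)

lemma snoc2_two (u : Fin 2 → A) (x : A) : (Fin.snoc u x : Fin 3 → A) 2 = x := by
  simp [Fin.snoc] <;> (intro h; exact absurd h (by decide))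

lemma exists_projAux (P : PCA A) (s : Term 2) :
    ∃ D ∈ P.filt, ∀ d ∈ D, ∀ t ∈ Tset P, ∀ c a b, pApp P t c a = some b →
      ∀ e, Term.eval P.app s ![c, a] = some e → P.app d b = some e := by
  obtain ⟨K, hK, hKreal⟩ := P.complete 1 s
  obtain ⟨W, hW, hWs⟩ := exists_trackerN P 1 (.op (.var 1) (.var 0))
    (fun _ => K) (fun _ => hK)
  refine ⟨W, hW, fun d hd t ht c a b hb e he => ?_⟩
  obtain ⟨u, hu, key⟩ := hWs d hd
  have h1 : appVec P.app (u 0) 2 ![c, a] = some e := (hKreal (u 0) (hu 0) ![c, a]).2 e he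
  have h1' : ((P.app (u 0) c).bind fun s' => P.app s' a) = some e := by
    have hfe : (fun i : Fin 2 => (![c, a, a] : Fin 3 → A) i.castSucc) = ![c, a] := by
      funext i; fin_cases i <;> rfl
    rw [← appVec_two_pre P.app (u 0) c a a, hfe]
    exact h1
  have h2 : P.app b (u 0) = some e := pApp_beta P ht hb h1'
  apply key b e
  simp [Term.eval, snoc1_zero, snoc1_one, h2]

lemma exists_proj0 (P : PCA A) :
    ∃ D ∈ P.filt, ∀ d ∈ D, ∀ t ∈ Tset P, ∀ c a b, pApp P t c a = some b →
      P.app d b = some c := by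
  obtain ⟨D, hD, hspec⟩ := exists_projAux P (.var 0)
  exact ⟨D, hD, fun d hd t ht c a b hb =>
    hspec d hd t ht c a b hb c (by simp [Term.eval])⟩

lemma exists_proj1 (P : PCA A) :
    ∃ D ∈ P.filt, ∀ d ∈ D, ∀ t ∈ Tset P, ∀ c a b, pApp P t c a = some b →
      P.app d b = some a := by
  obtain ⟨D, hD, hspec⟩ := exists_projAux P (.var 1)
  exact ⟨D, hD, fun d hd t ht c a b hb =>
    hspec d hd t ht c a b hb a (by simp [Term.eval])⟩

/- ### Uniform realization of fiberwise filters -/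

lemma sliceFilt_uniform (P : PCA A) (I : Asm P) {U : Set (I.carrier × A)}
    (hU : U ∈ sliceFilt P I) :
    ∃ V ∈ P.filt, ∀ v ∈ V, ∀ i c, I.E i c → ∃ r, P.app v c = some r ∧ (i, r) ∈ U := by
  have hmem : {W : Set (I.carrier × A) |
      ∃ V ∈ P.filt, ∀ v ∈ V, ∀ i c, I.E i c → ∃ r, P.app v c = some r ∧ (i, r) ∈ W}
      ∈ {Ψ | IsFibFilter P.app I.carrier Ψ ∧ {p : I.carrier × A | I.E p.1 p.2} ∈ Ψ ∧
        ∀ V ∈ P.filt, {p : I.carrier × A | p.2 ∈ V} ∈ Ψ} := by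
    refine ⟨⟨?_, ?_, ?_⟩, ?_, ?_⟩
    · rintro W ⟨V, hV, hVs⟩ i
      obtain ⟨v, hv⟩ := P.isFilter.nonempty V hV
      obtain ⟨c, hc⟩ := I.total i
      obtain ⟨r, -, hr⟩ := hVs v hv i c hc
      exact ⟨r, hr⟩
    · rintro W ⟨V, hV, hVs⟩ W' hWW'
      exact ⟨V, hV, fun v hv i c hc =>
        (hVs v hv i c hc).imp fun r hr => ⟨hr.1, hWW' hr.2⟩⟩
    · rintro W ⟨V, hV, hVs⟩ W' ⟨V', hV', hV's⟩ hdef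
      obtain ⟨S, hS, hSs⟩ := exists_tracker3 P
        (Term.op (.op (.var 0) (.var 2)) (.op (.var 1) (.var 2))) hV hV'
      refine ⟨S, hS, fun s hs i c hc => ?_⟩
      obtain ⟨v, hv, v', hv', key⟩ := hSs s hs
      obtain ⟨r, hr, hrW⟩ := hVs v hv i c hc
      obtain ⟨r', hr', hr'W⟩ := hV's v' hv' i c hc
      obtain ⟨q, hq⟩ := Option.isSome_iff_exists.mp (hdef i r r' hrW hr'W)
      refine ⟨q, key c q ?_, r, r', hrW, hr'W, hq⟩
      simp [Term.eval, hr, hr', hq]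
    · obtain ⟨V, hV, hid⟩ := exists_ireal P
      exact ⟨V, hV, fun v hv i c hc => ⟨c, hid v hv c, hc⟩⟩
    · intro V₀ hV₀
      obtain ⟨W, hW, hWs⟩ := exists_trackerN P 1 (.var 0)
        (fun _ => V₀) (fun _ => hV₀)
      refine ⟨W, hW, fun w hw i c _ => ?_⟩
      obtain ⟨u, hu, key⟩ := hWs w hw
      refine ⟨u 0, key c (u 0) ?_, hu 0⟩
      simp [Term.eval, snoc1_zero]
  exact Set.mem_sInter.mp hU _ hmem

/- ### The equivalence -/

noncomputable section

variable (P : PCA A) (I : Asm P)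

/-- The functor `Asm(A,φ)/I ⥤ Asm((A,φ)/I)`. -/
def sliceF : Over I ⥤ SliceAsm P I where
  obj X := ⟨X.left.carrier, X.hom.1, X.left.E, X.left.total⟩
  map {X Y} f := ⟨f.left.1,
    fun x => congrFun (congrArg Subtype.val (Over.w f)) x,
    by
      obtain ⟨U, hU, hf⟩ := f.left.2
      exact ⟨{p | p.2 ∈ U}, base_mem_sliceFilt hU, fun x a r hx hr => hf x a r hx hr⟩⟩
  map_id _ := Subtype.ext rfl
  map_comp _ _ := Subtype.ext rfl

/-- The assembly underlying the image of a slice assembly. -/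
def sliceGAsm (X : SliceAsm P I) : Asm P where
  carrier := X.carrier
  E := fun x b => ∃ t ∈ Tset P, ∃ c a, I.E (X.k x) c ∧ X.E x a ∧ pApp P t c a = some b
  total := fun x => by
    obtain ⟨a, ha⟩ := X.total x
    obtain ⟨c, hc⟩ := I.total (X.k x)
    obtain ⟨t, ht⟩ := P.isFilter.nonempty _ (Tset_filt P)
    obtain ⟨b, hb⟩ := Option.isSome_iff_exists.mp (pApp_isSome P ht c a)
    exact ⟨b, t, ht, c, a, hc, ha, hb⟩

/-- The structure morphism to `I`. -/
def sliceGHom (X : SliceAsm P I) : sliceGAsm P I X ⟶ I :=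
  ⟨X.k, by
    obtain ⟨D, hD, hspec⟩ := exists_proj0 P
    refine ⟨D, hD, ?_⟩
    rintro x b d ⟨t, ht, c, a, hc, ha, hb⟩ hd
    exact ⟨c, hspec d hd t ht c a b hb, hc⟩⟩

/-- The functor `Asm((A,φ)/I) ⥤ Asm(A,φ)/I`. -/
def sliceG : SliceAsm P I ⥤ Over I where
  obj X := Over.mk (sliceGHom P I X)
  map {X Y} f := Over.homMk
    ⟨f.1, by
      obtain ⟨U, hU, hf⟩ := f.2.2
      obtain ⟨V, hV, hVs⟩ := sliceFilt_uniform P I hU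
      obtain ⟨D0, hD0, h0⟩ := exists_proj0 P
      obtain ⟨D1, hD1, h1⟩ := exists_proj1 P
      obtain ⟨W, hW, hWs⟩ := exists_trackerN P 4
        (.op (.op (.var 0) (.op (.var 1) (.var 4)))
          (.op (.op (.var 3) (.op (.var 1) (.var 4))) (.op (.var 2) (.var 4))))
        ![Tset P, D0, D1, V]
        (by intro i; fin_cases i <;> simpa [Tset_filt, hD0, hD1, hV])
      refine ⟨W, hW, ?_⟩
      rintro x b w ⟨t, ht, c, a, hc, ha, hb⟩ hw
      obtain ⟨u, hu, key⟩ := hWs w hw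
      have hu0 : u 0 ∈ Tset P := hu 0
      have hu1 : u 1 ∈ D0 := hu 1
      have hu2 : u 2 ∈ D1 := hu 2
      have hu3 : u 3 ∈ V := hu 3
      have e1 : P.app (u 1) b = some c := h0 (u 1) hu1 t ht c a b hb
      have e2 : P.app (u 2) b = some a := h1 (u 2) hu2 t ht c a b hb
      obtain ⟨r, e3, hrU⟩ := hVs (u 3) hu3 (X.k x) c hc
      obtain ⟨a', e4, ha'⟩ := hf x a r ha hrU
      obtain ⟨b', hb'⟩ := Option.isSome_iff_exists.mp (pApp_isSome P hu0 c a')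
      refine ⟨b', key b b' ?_, u 0, hu0, c, a', by rw [f.2.1 x]; exact hc, ha', hb'⟩
      rcases hx0 : P.app (u 0) c with _ | s
      · rw [pApp, hx0] at hb'; simp at hb'
      · rw [pApp, hx0, Option.bind_some] at hb'
        simp [Term.eval, snoc4_zero, snoc4_one, snoc4_two, snoc4_three, snoc4_four,
          e1, e2, e3, e4, hx0, hb']⟩
    (Subtype.ext (funext f.2.1))
  map_id _ := Over.OverMorphism.ext (Subtype.ext rfl)
  map_comp _ _ := Over.OverMorphism.ext (Subtype.ext rfl)

/-- Unit. -/
def sliceUnitHom (X : Over I) : X ⟶ (sliceF P I ⋙ sliceG P I).obj X :=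
  Over.homMk
    ⟨fun x => x, by
      obtain ⟨U, hU, hhom⟩ := X.hom.2
      obtain ⟨W, hW, hWs⟩ := exists_trackerN P 2
        (.op (.op (.var 0) (.op (.var 1) (.var 2))) (.var 2)) ![Tset P, U]
        (by intro i; fin_cases i <;> simpa [Tset_filt, hU])
      refine ⟨W, hW, fun x a w hx hw => ?_⟩
      obtain ⟨u, hu, key⟩ := hWs w hw
      have hu0 : u 0 ∈ Tset P := hu 0
      have hu1 : u 1 ∈ U := hu 1
      obtain ⟨c, hc1, hc2⟩ := hhom x a (u 1) hx hu1
      obtain ⟨b, hb⟩ := Option.isSome_iff_exists.mp (pApp_isSome P hu0 c a)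
      refine ⟨b, key a b ?_, u 0, hu0, c, a, hc2, hx, hb⟩
      rcases hx0 : P.app (u 0) c with _ | s
      · rw [pApp, hx0] at hb; simp at hb
      · rw [pApp, hx0, Option.bind_some] at hb
        simp [Term.eval, snoc2_zero, snoc2_one, snoc2_two, hc1, hx0, hb]⟩
    (Subtype.ext rfl)

/-- Unit inverse. -/
def sliceUnitInv (X : Over I) : (sliceF P I ⋙ sliceG P I).obj X ⟶ X :=
  Over.homMk
    ⟨fun x => x, by
      obtain ⟨D, hD, h1⟩ := exists_proj1 P
      refine ⟨D, hD, ?_⟩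
      rintro x b d ⟨t, ht, c, a, hc, ha, hb⟩ hd
      exact ⟨a, h1 d hd t ht c a b hb, ha⟩⟩
    (Subtype.ext rfl)

/-- Counit. -/
def sliceCounitHom (Y : SliceAsm P I) : (sliceG P I ⋙ sliceF P I).obj Y ⟶ Y :=
  ⟨fun x => x, fun _ => rfl, by
    obtain ⟨D, hD, h1⟩ := exists_proj1 P
    refine ⟨{p | p.2 ∈ D}, base_mem_sliceFilt hD, ?_⟩
    rintro x b d ⟨t, ht, c, a, hc, ha, hb⟩ hd
    exact ⟨a, h1 d hd t ht c a b hb, ha⟩⟩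

/-- Counit inverse. -/
def sliceCounitInv (Y : SliceAsm P I) : Y ⟶ (sliceG P I ⋙ sliceF P I).obj Y :=
  ⟨fun x => x, fun _ => rfl, by
    have hWdef : fibSubDef P.app {p : I.carrier × A | p.2 ∈ Tset P}
        {p : I.carrier × A | I.E p.1 p.2} := by
      intro i r s hr _
      exact isSome_bind_left (pApp_isSome P hr s s)
    refine ⟨fibSubApp P.app {p : I.carrier × A | p.2 ∈ Tset P}
      {p : I.carrier × A | I.E p.1 p.2},
      sliceFilt_appClosed (base_mem_sliceFilt (Tset_filt P))
        (EI_mem_sliceFilt P I) hWdef, ?_⟩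
    rintro x a s ha ⟨t, c, ht, hc, hstc⟩
    have hps : pApp P t c a = P.app s a := by
      simp only [pApp, hstc, Option.bind_some]
    have hsome : (P.app s a).isSome := by rw [← hps]; exact pApp_isSome P ht c a
    obtain ⟨b, hb⟩ := Option.isSome_iff_exists.mp hsome
    exact ⟨b, hb, t, ht, c, a, hc, ha, by rw [hps]; exact hb⟩⟩

end

/-- The slice category `Asm(A,φ)/I` is equivalent to the category of
assemblies over the slice PCA `(A,φ)/I` (objects: sets over `|I|` with a total existence
relation; morphisms: fiberwise functions tracked by an element of the filter `φ_I`). -/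
theorem statement14 (A : Type) (P : PCA A) (I : Asm P) :
    Nonempty (Over I ≌ SliceAsm P I) := by
  refine ⟨CategoryTheory.Equivalence.mk (sliceF P I) (sliceG P I) ?_ ?_⟩
  · exact NatIso.ofComponents
      (fun X => ⟨sliceUnitHom P I X, sliceUnitInv P I X,
        Over.OverMorphism.ext (Subtype.ext rfl), Over.OverMorphism.ext (Subtype.ext rfl)⟩)
      (fun f => Over.OverMorphism.ext (Subtype.ext rfl))
  · exact NatIso.ofComponents
      (fun Y => ⟨sliceCounitHom P I Y, sliceCounitInv P I Y,
        Subtype.ext rfl, Subtype.ext rfl⟩)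
      (fun f => Subtype.ext rfl)


end PcaPaper
end

section
/- Let (A,φ), (B,ψ), (C,χ) be PCAs over Set. Then: (i) the identity applicative morphism δ_A: (A,φ) → (A,φ) is quasi-surjective; (ii) the composition of two quasi-surjective applicative morphisms is quasi-surjective; (iii) if f: (A,φ) → (B,ψ) and g: (B,ψ) → (C,χ) are applicative morphisms such that g∘f is quasi-surjective, then g is quasi-surjective. -/
open CategoryTheory

namespace PcaPaper

variable {A B C : Type}

/- ### Auxiliary lemmas for statement16 -/

lemma relImage_relId (V : Set A) : relImage (relId A) V = V := by
  ext b; constructor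
  · rintro ⟨a, ha, rfl⟩; exact ha
  · intro hb; exact ⟨b, hb, rfl⟩

lemma relImage_relComp (g : B → C → Prop) (f : A → B → Prop) (V : Set A) :
    relImage (RelComp g f) V = relImage g (relImage f V) := by
  ext c; constructor
  · rintro ⟨a, ha, b, hab, hbc⟩; exact ⟨b, ⟨a, ha, hab⟩, hbc⟩
  · rintro ⟨b, ⟨a, ha, hab⟩, hbc⟩; exact ⟨a, ha, b, hab, hbc⟩

lemma appVec_three_pre (app : PApp A) (r u v w x : A) :
    (appVec app r 3 fun i => (![u, v, w, x] : Fin 4 → A) i.castSucc)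
      = (((app r u).bind fun s => app s v).bind fun s => app s w) := rfl

lemma appVec_four_cons (app : PApp A) (r u v w x : A) :
    appVec app r (3 + 1) ![u, v, w, x]
      = ((((app r u).bind fun s => app s v).bind fun s => app s w).bind
          fun s => app s x) := rfl

lemma realizes4_chain (P : PCA A) {T : Set A} {t : Term (3 + 1)}
    (hreal : Realizes P.app T t) {r : A} (hr : r ∈ T) (u v w : A) :
    ∃ s1 s2 s3, P.app r u = some s1 ∧ P.app s1 v = some s2 ∧ P.app s2 w = some s3 := by
  have h1 : ((((P.app r u).bind fun s => P.app s v).bind fun s => P.app s w)).isSome := by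
    have h := (hreal r hr ![u, v, w, w]).1
    rwa [appVec_three_pre] at h
  cases hru : P.app r u with
  | none => rw [hru] at h1; simp at h1
  | some s1 =>
    rw [hru, Option.bind_some] at h1
    cases hsv : P.app s1 v with
    | none => rw [hsv] at h1; simp at h1
    | some s2 =>
      rw [hsv, Option.bind_some] at h1
      obtain ⟨s3, hs3⟩ := Option.isSome_iff_exists.mp h1
      exact ⟨s1, s2, s3, rfl, hsv, hs3⟩

lemma exists_tracker4 (P : PCA A) (t : Term (3 + 1)) {U V W : Set A}
    (hU : U ∈ P.filt) (hV : V ∈ P.filt) (hW : W ∈ P.filt) :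
    ∃ S ∈ P.filt, ∀ s ∈ S, ∃ u ∈ U, ∃ v ∈ V, ∃ w ∈ W,
      ∀ x c : A, Term.eval P.app t ![u, v, w, x] = some c → P.app s x = some c := by
  obtain ⟨T, hT, hreal⟩ := P.complete 3 t
  have hdef1 : SubDef P.app T U := by
    intro r hr u _
    obtain ⟨s1, s2, s3, h1, -, -⟩ := realizes4_chain P hreal hr u u u
    simp [h1]
  have hTU := P.isFilter.appClosed T hT U hU hdef1
  have hdef2 : SubDef P.app (SubApp P.app T U) V := by
    rintro s ⟨r, hr, u, hu, hru⟩ v _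
    obtain ⟨s1, s2, s3, h1, h2, -⟩ := realizes4_chain P hreal hr u v v
    rw [hru] at h1; injection h1 with h; subst h
    simp [h2]
  have hTUV := P.isFilter.appClosed _ hTU V hV hdef2
  have hdef3 : SubDef P.app (SubApp P.app (SubApp P.app T U) V) W := by
    rintro s2' ⟨s1', ⟨r, hr, u, hu, hru⟩, v, hv, hsv⟩ w _
    obtain ⟨s1, s2, s3, h1, h2, h3⟩ := realizes4_chain P hreal hr u v w
    rw [hru] at h1; injection h1 with h; subst h
    rw [hsv] at h2; injection h2 with h; subst h
    simp [h3]
  refine ⟨_, P.isFilter.appClosed _ hTUV W hW hdef3, ?_⟩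
  rintro s ⟨s2', ⟨s1', ⟨r, hr, u, hu, hru⟩, v, hv, hsv⟩, w, hw, hsw⟩
  refine ⟨u, hu, v, hv, w, hw, fun x c hc => ?_⟩
  have h2 : appVec P.app r (3 + 1) ![u, v, w, x] = some c := (hreal r hr ![u, v, w, x]).2 c hc
  rw [appVec_four_cons, hru, Option.bind_some, hsv, Option.bind_some, hsw] at h2
  simpa using h2

lemma eval_t4 (app : PApp A) (u v w x : A) :
    Term.eval app (Term.op (.var 0) (.op (.op (.var 1) (.var 2)) (.var 3))) ![u, v, w, x]
      = ((app v w).bind fun p => app p x).bind fun e => app u e := by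
  simp [Term.eval]

/-- (i) The identity applicative morphism is quasi-surjective; (ii) the
composition of quasi-surjective applicative morphisms is quasi-surjective; (iii) if the
composite `g ∘ f` of applicative morphisms is quasi-surjective then so is `g`. -/
theorem statement16 (A B C : Type) (P : PCA A) (Q : PCA B) (R : PCA C) :
    QuasiSurjective P P (relId A) ∧
    (∀ (f : A → B → Prop) (g : B → C → Prop),
      IsAppMor P.app P.filt Q.app Q.filt f →
      IsAppMor Q.app Q.filt R.app R.filt g →
      QuasiSurjective P Q f → QuasiSurjective Q R g →
      QuasiSurjective P R (RelComp g f)) ∧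
    (∀ (f : A → B → Prop) (g : B → C → Prop),
      IsAppMor P.app P.filt Q.app Q.filt f →
      IsAppMor Q.app Q.filt R.app R.filt g →
      QuasiSurjective P R (RelComp g f) → QuasiSurjective Q R g) := by
  refine ⟨?_, ?_, ?_⟩
  · -- (i) identity is quasi-surjective
    obtain ⟨N, hN, hI⟩ := exists_ireal P
    refine ⟨N, hN, fun U hU => ⟨U, hU, fun n hn b hb => ?_⟩⟩
    rw [relImage_relId] at hb
    exact ⟨b, hI n hn b, hb⟩
  · -- (ii) composition of quasi-surjective morphisms
    rintro f g hf hg ⟨Nf, hNf, qsf⟩ ⟨Ng, hNg, qsg⟩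
    obtain ⟨T, hT, hfT⟩ := hg.tracked
    have hgNf : relImage g Nf ∈ R.filt := hg.image Nf hNf
    obtain ⟨S, hS, hSkey⟩ := exists_tracker4 R
      (Term.op (.var 0) (.op (.op (.var 1) (.var 2)) (.var 3))) hNg hT hgNf
    refine ⟨S, hS, fun U hU => ?_⟩
    obtain ⟨V, hV, hVkey⟩ := qsg U hU
    obtain ⟨W, hW, hWkey⟩ := qsf V hV
    refine ⟨W, hW, fun s hs c hc => ?_⟩
    obtain ⟨u, hu, v, hv, w, hw, key⟩ := hSkey s hs
    obtain ⟨a, haW, b, hab, hbc⟩ := hc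
    obtain ⟨m, hm, hmw⟩ := hw
    obtain ⟨b', hmb, hb'V⟩ := hWkey m hm b ⟨a, haW, hab⟩
    obtain ⟨d, e, hvw, hdc, hgb'e⟩ := hfT m b b' hmb w c hmw hbc v hv
    obtain ⟨r, hur, hrU⟩ := hVkey u hu e ⟨b', hb'V, hgb'e⟩
    refine ⟨r, key c r ?_, hrU⟩
    rw [eval_t4, hvw, Option.bind_some, hdc, Option.bind_some, hur]
  · -- (iii) right factor of a quasi-surjective composite
    rintro f g hf hg ⟨N, hN, qs⟩
    refine ⟨N, hN, fun U hU => ?_⟩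
    obtain ⟨V, hV, hkey⟩ := qs U hU
    refine ⟨relImage f V, hf.image V hV, fun n hn c hc => ?_⟩
    apply hkey n hn
    rwa [relImage_relComp]

end PcaPaper
end
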